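/- Let p(x,y) be a nonconstant polynomial and S a finitely generated Hénon semigroup. Then there exists k₀ ≥ 1 such that for every h ∈ G_k with k ≥ k₀, the polynomial p ∘ h has the form p∘h(x,y) = c · y^{deg(p∘h)} + (lower order terms), with c ≠ 0. -/

import Mathlib

open Filter Metric Set Bornology

noncomputable section

/-- A generalized Hénon map of ℂ²: `H (x,y) = (y, p(y) - a x)` with `a ≠ 0` and
`deg p = d ≥ 2`. -/
def IsGenHenonDeg (h : ℂ × ℂ → ℂ × ℂ) (d : ℕ) : Prop :=
  ∃ (a : ℂ) (p : Polynomial ℂ), a ≠ 0 ∧ 2 ≤ p.natDegree ∧ p.natDegree = d ∧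
    ∀ x y : ℂ, h (x, y) = (y, p.eval y - a * x)

/-- A Hénon map of degree `d`: a finite (nonempty) composition of generalized
Hénon maps, `d` being the product of the degrees of the factors. -/
def IsHenonDeg (h : ℂ × ℂ → ℂ × ℂ) (d : ℕ) : Prop :=
  ∃ l : List ((ℂ × ℂ → ℂ × ℂ) × ℕ), l ≠ [] ∧
    (∀ gd ∈ l, IsGenHenonDeg gd.1 gd.2) ∧
    h = (l.map Prod.fst).foldr (· ∘ ·) id ∧ d = (l.map Prod.snd).prod

def IsHenon (h : ℂ × ℂ → ℂ × ℂ) : Prop := ∃ d, IsHenonDeg h d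

/-- The polydisk `V_R = {max(|x|,|y|) ≤ R}`. -/
def VR (R : ℝ) : Set (ℂ × ℂ) := {z | max ‖z.1‖ ‖z.2‖ ≤ R}

/-- `V_R^+ = {|y| ≥ max(|x|, R)}`. -/
def VRp (R : ℝ) : Set (ℂ × ℂ) := {z | max ‖z.1‖ R ≤ ‖z.2‖}

/-- `V_R^- = {|x| ≥ max(|y|, R)}`. -/
def VRm (R : ℝ) : Set (ℂ × ℂ) := {z | max ‖z.2‖ R ≤ ‖z.1‖}

/-- The element of the semigroup given by the word `w`:
`H_{w 0} ∘ H_{w 1} ∘ ⋯ ∘ H_{w (k-1)}`. -/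
def wordProd {n : ℕ} (H : Fin n → Equiv.Perm (ℂ × ℂ)) {k : ℕ}
    (w : Fin k → Fin n) : Equiv.Perm (ℂ × ℂ) :=
  (List.ofFn fun j => H (w j)).prod

namespace HenonAux
open Polynomial



lemma lemB : ∀ (j : ℕ) (g : Polynomial ℂ) (L : ℂ), g ≠ 0 → L ≠ 0 →
    (X - C L) ^ j ∣ g → j < g.support.card := by
  intro j
  induction j with
  | zero => intro g L hg _ _; simpa [Finset.card_pos] using
      (Polynomial.nonempty_support_iff).mpr hg
  | succ j ih =>
    intro g L hg hL hdvd
    set e := g.natTrailingDegree with he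
    set h : Polynomial ℂ := X * derivative g - C (e : ℂ) * g with hh
    have hcoeff : ∀ b : ℕ, h.coeff b = ((b : ℂ) - (e : ℂ)) * g.coeff b := by
      intro b
      cases b with
      | zero => simp [hh, coeff_X_mul_zero, mul_comm]
      | succ n =>
        simp only [hh, coeff_sub, coeff_X_mul, coeff_derivative, coeff_C_mul]
        push_cast; ring
    have hsupp : h.support ⊆ g.support.erase e := by
      intro b hb
      rw [mem_support_iff, hcoeff] at hb
      have hb1 : g.coeff b ≠ 0 := by intro h0; simp [h0] at hb
      have hb2 : b ≠ e := by
        intro h0; subst h0; simp at hb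
      exact Finset.mem_erase.mpr ⟨hb2, mem_support_iff.mpr hb1⟩
    have heval : g.eval L = 0 := by
      obtain ⟨u, hu⟩ := hdvd
      rw [hu]; simp
    by_cases hzero : h = 0
    · -- g is a monomial, contradiction with eval L g = 0
      exfalso
      have hmono : ∀ b, b ≠ e → g.coeff b = 0 := by
        intro b hb
        have := hcoeff b
        rw [hzero] at this
        have hbe : ((b : ℂ) - (e : ℂ)) ≠ 0 := by
          intro h0
          apply hb
          exact_mod_cast Nat.cast_injective (sub_eq_zero.mp h0)
        have h0b : ((b : ℂ) - (e : ℂ)) * g.coeff b = 0 := by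
          rw [← hcoeff b, hzero]; simp
        rcases mul_eq_zero.mp h0b with h1 | h1
        · exact absurd h1 hbe
        · exact h1
      have hsup1 : g.support ⊆ {e} := by
        intro b hb
        rw [mem_support_iff] at hb
        by_contra hbe
        exact hb (hmono b (by simpa using hbe))
      have : g.eval L = g.coeff e * L ^ e := by
        rw [eval_eq_sum]
        unfold Polynomial.sum
        rw [Finset.sum_subset hsup1]
        · simp
        · intro x _ hx
          rw [mem_support_iff, not_not] at hx
          simp [hx]
      rw [heval] at this
      have hce : g.coeff e ≠ 0 := by
        simpa [he] using mt trailingCoeff_eq_zero.mp hg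
      exact hce (by
        have hLe : L ^ e ≠ 0 := pow_ne_zero _ hL
        field_simp at this
        exact (mul_eq_zero.mp this.symm).resolve_right hLe)
    · have hdvd' : (X - C L) ^ j ∣ h := by
        obtain ⟨u, hu⟩ := hdvd
        have hpow : (X - C L) ^ j ∣ (X - C L) ^ (j + 1) := pow_dvd_pow _ (Nat.le_succ j)
        have h1 : (X - C L) ^ j ∣ derivative g := by
          rw [hu, derivative_mul, derivative_pow]
          apply dvd_add
          · apply Dvd.dvd.mul_right
            apply Dvd.dvd.mul_right
            apply Dvd.dvd.mul_left
            simpa using (dvd_refl ((X - C L) ^ j))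
          · exact Dvd.dvd.mul_right hpow _
        have h2 : (X - C L) ^ j ∣ g := hu ▸ Dvd.dvd.mul_right hpow _
        exact dvd_sub (Dvd.dvd.mul_left h1 _) (Dvd.dvd.mul_left h2 _)
      have := ih h L hzero hL hdvd'
      have hce : e ∈ g.support := by
        rw [mem_support_iff]
        simpa [he] using mt trailingCoeff_eq_zero.mp hg
      have hcard : h.support.card ≤ g.support.card - 1 := by
        calc h.support.card ≤ (g.support.erase e).card := Finset.card_le_card hsupp
        _ = g.support.card - 1 := Finset.card_erase_of_mem hce
      omega

lemma lemA (g : Polynomial ℂ) (L : ℂ) (hg : g ≠ 0) (hL : L ≠ 0) :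
    ∃ j < g.support.card, (g.comp (X + C L)).coeff j ≠ 0 := by
  set G := g.comp (X + C L) with hG
  have hcomp : G.comp (X - C L) = g := by
    rw [hG, comp_assoc]
    simp
  have hGne : G ≠ 0 := by
    intro h0; rw [h0, zero_comp] at hcomp; exact hg hcomp.symm
  obtain ⟨t, ht⟩ : ∃ t, t = G.natTrailingDegree := ⟨_, rfl⟩
  refine ⟨t, ?_, ?_⟩
  · have hdvd : (X - C L) ^ t ∣ g := by
      have hX : (X : Polynomial ℂ) ^ t ∣ G := by
        rw [X_pow_dvd_iff]
        intro d hd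
        exact coeff_eq_zero_of_lt_natTrailingDegree (ht ▸ hd)
      obtain ⟨u, hu⟩ := hX
      refine ⟨u.comp (X - C L), ?_⟩
      rw [← hcomp, hu, mul_comp, pow_comp, X_comp]
    exact lemB _ g L hg hL hdvd
  · rw [ht]
    simpa using mt trailingCoeff_eq_zero.mp hGne

lemma comp_coeff (g : Polynomial ℂ) (L : ℂ) (j : ℕ) :
    (g.comp (X + C L)).coeff j
      = ∑ β ∈ g.support, g.coeff β * (L ^ (β - j) * (β.choose j : ℂ)) := by
  conv_lhs => rw [comp, eval₂_eq_sum]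
  unfold Polynomial.sum
  rw [finset_sum_coeff]
  refine Finset.sum_congr rfl ?_
  intro β _
  rw [coeff_C_mul, coeff_X_add_C_pow]



noncomputable section
abbrev PP := Polynomial (Polynomial ℂ)

/-- coefficient of x^α y^β (outer variable x, inner variable y) -/
def pc (Q : PP) (α β : ℕ) : ℂ := (Q.coeff α).coeff β

def pairs (Q : PP) : Finset (ℕ × ℕ) :=
  Q.support.biUnion fun α => (Q.coeff α).support.image fun β => (α, β)

lemma mem_pairs {Q : PP} {z : ℕ × ℕ} : z ∈ pairs Q ↔ pc Q z.1 z.2 ≠ 0 := by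
  constructor
  · intro h
    rw [pairs, Finset.mem_biUnion] at h
    obtain ⟨α, hα, hz⟩ := h
    rw [Finset.mem_image] at hz
    obtain ⟨β, hβ, hz⟩ := hz
    subst hz
    exact mem_support_iff.mp hβ
  · intro h
    rw [pairs, Finset.mem_biUnion]
    refine ⟨z.1, ?_, ?_⟩
    · rw [mem_support_iff]
      intro h0
      exact h (by rw [pc, h0, coeff_zero])
    · rw [Finset.mem_image]
      exact ⟨z.2, mem_support_iff.mpr h, rfl⟩

def wdeg (i : ℕ) (Q : PP) : ℕ := (pairs Q).sup fun z => z.1 + i * z.2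

lemma le_wdeg {i : ℕ} {Q : PP} {z : ℕ × ℕ} (hz : z ∈ pairs Q) :
    z.1 + i * z.2 ≤ wdeg i Q :=
  Finset.le_sup (f := fun z : ℕ × ℕ => z.1 + i * z.2) hz

def NC (Q : PP) : Prop := ∃ z ∈ pairs Q, z ≠ (0, 0)

def Inv (Q : PP) (m : ℕ) : Prop :=
  ∀ i, 2 ≤ i → ∃ S : Finset (ℕ × ℕ), S.card ≤ m ∧
    ∀ z ∈ pairs Q, z.1 + i * z.2 = wdeg i Q → z ∈ S

def Pure (Q : PP) : Prop :=
  ∃ N, 1 ≤ N ∧ pc Q 0 N ≠ 0 ∧ ∀ z ∈ pairs Q, z = (0, N) ∨ z.1 + z.2 < N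

lemma Inv.mono {Q : PP} {m m' : ℕ} (h : Inv Q m) (hm : m ≤ m') : Inv Q m' := by
  intro i hi
  obtain ⟨S, hS, hcov⟩ := h i hi
  exact ⟨S, hS.trans hm, hcov⟩

lemma NC.ne_zero {Q : PP} (h : NC Q) : Q ≠ 0 := by
  obtain ⟨z, hz, _⟩ := h
  intro h0
  rw [h0] at hz
  rw [mem_pairs] at hz
  simp [pc] at hz

lemma pairs_nonempty {Q : PP} (h : Q ≠ 0) : (pairs Q).Nonempty := by
  obtain ⟨α, hα⟩ := (Polynomial.nonempty_support_iff).mpr h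
  obtain ⟨β, hβ⟩ := (Polynomial.nonempty_support_iff).mpr (mem_support_iff.mp hα)
  exact ⟨(α, β), mem_pairs.mpr (mem_support_iff.mp hβ)⟩

lemma NC.one_le_wdeg {Q : PP} (h : NC Q) {i : ℕ} (hi : 1 ≤ i) : 1 ≤ wdeg i Q := by
  obtain ⟨z, hz, hne⟩ := h
  rcases z with ⟨a, b⟩
  have hw : a + i * b ≤ wdeg i Q := le_wdeg (i := i) hz
  have h1 : 1 ≤ a + i * b := by
    rcases Nat.eq_zero_or_pos a with ha | ha
    · rcases Nat.eq_zero_or_pos b with hb | hb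
      · exact absurd (by simp [ha, hb] : ((a, b) : ℕ × ℕ) = (0,0)) hne
      · have := Nat.mul_le_mul hi hb
        omega
    · omega
  omega

lemma Pure.inv_one {Q : PP} (h : Pure Q) : Inv Q 1 := by
  obtain ⟨N, hN1, hcN, hall⟩ := h
  intro i hi
  refine ⟨{(0, N)}, by simp, ?_⟩
  intro z hz hzsup
  rcases hall z hz with h1 | h1
  · simp [h1]
  · exfalso
    have hmem : ((0 : ℕ), N) ∈ pairs Q := mem_pairs.mpr hcN
    have hle : 0 + i * N ≤ wdeg i Q := le_wdeg hmem
    have h2 : z.1 + i * z.2 ≤ i * (z.1 + z.2) := by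
      have ha : z.1 ≤ i * z.1 := Nat.le_mul_of_pos_left _ (by omega)
      have hd : i * (z.1 + z.2) = i * z.1 + i * z.2 := Nat.mul_add i z.1 z.2
      omega
    have h3 : i * (z.1 + z.2) < i * N :=
      Nat.mul_lt_mul_of_le_of_lt (Nat.le_refl i) h1 (by omega)
    omega









def hsub (A : ℂ) (p : Polynomial ℂ) : PP := C p - C (C A) * X

def Fh (A : ℂ) (p : Polynomial ℂ) : Polynomial ℂ →+* PP :=
  Polynomial.eval₂RingHom (Polynomial.C.comp Polynomial.C) (hsub A p)

def St (A : ℂ) (p : Polynomial ℂ) : PP →+* PP :=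
  Polynomial.eval₂RingHom (Fh A p) (C X)

def Ev (x y : ℂ) : PP →+* ℂ := Polynomial.eval₂RingHom (Polynomial.evalRingHom y) x

lemma Ev_C (x y : ℂ) (r : Polynomial ℂ) : Ev x y (C r) = r.eval y := by simp [Ev]

lemma Ev_X (x y : ℂ) : Ev x y (X : PP) = x := by simp [Ev]

lemma Ev_St (A : ℂ) (p : Polynomial ℂ) (x y : ℂ) (Q : PP) :
    Ev x y (St A p Q) = Ev y (p.eval y - A * x) Q := by
  have h : (Ev x y).comp (St A p) = Ev y (p.eval y - A * x) := by
    apply Polynomial.ringHom_ext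
    · intro r
      have hr : (Ev x y).comp (Fh A p) = Polynomial.evalRingHom (p.eval y - A * x) := by
        apply Polynomial.ringHom_ext
        · intro c
          simp [Fh, Ev]
        · simp [Fh, Ev, hsub]
      calc (Ev x y).comp (St A p) (C r) = Ev x y (Fh A p r) := by
            simp [St]
        _ = r.eval (p.eval y - A * x) := by
            rw [← RingHom.comp_apply, hr]; simp
        _ = Ev y (p.eval y - A * x) (C r) := by rw [Ev_C]
    · calc (Ev x y).comp (St A p) X = Ev x y (C X) := by simp [St]
        _ = y := by rw [Ev_C]; simp
        _ = Ev y (p.eval y - A * x) X := by rw [Ev_X]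
  calc Ev x y (St A p Q) = ((Ev x y).comp (St A p)) Q := rfl
    _ = Ev y (p.eval y - A * x) Q := by rw [h]

lemma coeff_hsub_pow (A : ℂ) (p : Polynomial ℂ) (β j : ℕ) :
    ((hsub A p) ^ β).coeff j
      = C ((β.choose j : ℂ) * (-A) ^ j) * p ^ (β - j) := by
  have h1 : hsub A p = C (- C A) * X + C p := by
    rw [hsub, map_neg]; ring
  rw [h1, add_pow, finset_sum_coeff]
  have h2 : ∀ k ∈ Finset.range (β + 1),
      ((C (- C A) * X : PP) ^ k * (C p) ^ (β - k) * (β.choose k : PP)).coeff j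
        = if j = k then C ((β.choose k : ℂ) * (-A) ^ k) * p ^ (β - k) else 0 := by
    intro k _
    have e1 : ((C (- C A) * X : PP) ^ k * (C p) ^ (β - k) * (β.choose k : PP))
        = C (C ((β.choose k : ℂ) * (-A) ^ k) * p ^ (β - k)) * X ^ k := by
      rw [mul_pow, ← map_pow, ← map_pow,
        show (- C A : Polynomial ℂ) ^ k = C ((-A) ^ k) from by rw [← map_neg, ← map_pow],
        show ((β.choose k : PP)) = C (C ((β.choose k : ℕ) : ℂ)) from by
          rw [Polynomial.C_eq_natCast, Polynomial.C_eq_natCast]]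
      simp only [map_mul]
      ring
    rw [e1, coeff_C_mul, coeff_X_pow, mul_ite, mul_one, mul_zero]
  rw [Finset.sum_congr rfl h2, Finset.sum_ite_eq (Finset.range (β + 1)) j
    (fun k => C ((β.choose k : ℂ) * (-A) ^ k) * p ^ (β - k))]
  by_cases hj : j ≤ β
  · rw [if_pos (Finset.mem_range.mpr (by omega))]
  · rw [if_neg (by simp; omega)]
    rw [Nat.choose_eq_zero_of_lt (by omega)]
    simp

lemma sum_pairs (Q : PP) (F : ℕ × ℕ → ℂ) :
    ∑ α ∈ Q.support, ∑ β ∈ (Q.coeff α).support, F (α, β) = ∑ z ∈ pairs Q, F z := by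
  rw [pairs, Finset.sum_biUnion]
  · apply Finset.sum_congr rfl
    intro α _
    rw [Finset.sum_image]
    intro a _ b _ hab
    simpa using hab
  · intro a _ b _ hab
    simp only [Finset.disjoint_left]
    intro z hz hz'
    rw [Finset.mem_image] at hz hz'
    obtain ⟨β, _, rfl⟩ := hz
    obtain ⟨β', _, h⟩ := hz'
    exact hab (by simpa using (congrArg Prod.fst h).symm)

lemma St_apply (A : ℂ) (p : Polynomial ℂ) (Q : PP) :
    St A p Q = ∑ α ∈ Q.support, Fh A p (Q.coeff α) * (C X) ^ α := by
  conv_lhs => rw [St, coe_eval₂RingHom, eval₂_eq_sum]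
  rfl

lemma Fh_apply (A : ℂ) (p : Polynomial ℂ) (r : Polynomial ℂ) :
    Fh A p r = ∑ β ∈ r.support, C (C (r.coeff β)) * (hsub A p) ^ β := by
  conv_lhs => rw [Fh, coe_eval₂RingHom, eval₂_eq_sum]
  rfl

lemma St_coeff (A : ℂ) (p : Polynomial ℂ) (Q : PP) (j v : ℕ) :
    pc (St A p Q) j v = ∑ z ∈ pairs Q,
      pc Q z.1 z.2 * (z.2.choose j : ℂ) * (-A) ^ j *
        (if z.1 ≤ v then (p ^ (z.2 - j)).coeff (v - z.1) else 0) := by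
  rw [← sum_pairs Q (fun z => pc Q z.1 z.2 * (z.2.choose j : ℂ) * (-A) ^ j *
        (if z.1 ≤ v then (p ^ (z.2 - j)).coeff (v - z.1) else 0))]
  rw [pc, St_apply, finset_sum_coeff, finset_sum_coeff]
  apply Finset.sum_congr rfl
  intro α _
  rw [Fh_apply, Finset.sum_mul, finset_sum_coeff, finset_sum_coeff]
  apply Finset.sum_congr rfl
  intro β _
  have e1 : (C (C ((Q.coeff α).coeff β)) * (hsub A p) ^ β * (C X) ^ α : PP)
      = C (C ((Q.coeff α).coeff β)) * (hsub A p) ^ β * C (X ^ α) := by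
    rw [← map_pow]
  rw [e1, coeff_mul_C, coeff_C_mul, coeff_hsub_pow, coeff_mul_X_pow', coeff_C_mul, coeff_C_mul]
  simp only [pc]
  split_ifs <;> ring



lemma natDegree_pow_le' (p : Polynomial ℂ) (n : ℕ) : (p ^ n).natDegree ≤ n * p.natDegree := by
  rw [natDegree_pow]

lemma arith1 {d j₀ k lam z1 z2 : ℕ} (hdz : d * z2 = d * j₀ + d * k)
    (hlt : z1 + d * z2 < lam) (hdj : d * j₀ ≤ lam) :
    d * k < (lam - d * j₀) - z1 := by omega

lemma arith_le {a b lam : ℕ} (hab : a ≤ b) (hb : b ≤ lam) : lam - b ≤ lam - a := by omega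

lemma arith3 {a b lam k : ℕ} (hb : b ≤ lam) (hk : b = a + k) :
    (lam - a) - (lam - b) = k := by omega

lemma arith_key {i d lam Λ j₀ z1 z2 : ℕ} (hi : 2 ≤ i) (hd : 2 ≤ d)
    (hsupp : d * z1 + z2 ≤ lam) (hdj : d * j₀ ≤ lam)
    (hlow : j₀ + i * (lam - d * j₀) ≤ Λ) (hline : z1 + i * z2 = Λ) : z1 ≤ j₀ := by
  by_contra hgt
  push_neg at hgt
  obtain ⟨δ, hδ1, hδ2⟩ : ∃ δ, z1 = j₀ + δ ∧ 1 ≤ δ := ⟨z1 - j₀, by omega, by omega⟩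
  have e1 : i * (lam - d * j₀) + i * (d * j₀) = i * lam := by
    rw [← Nat.mul_add, Nat.sub_add_cancel hdj]
  have e2 : i * (d * z1 + z2) ≤ i * lam := Nat.mul_le_mul_left i hsupp
  have e3 : i * (d * z1 + z2) = i * d * z1 + i * z2 := by ring
  have e6 : i * (d * j₀) = i * d * j₀ := by ring
  have e8 : i * d * z1 = i * d * j₀ + i * d * δ := by rw [hδ1]; ring
  have e9 : 4 * δ ≤ i * d * δ := Nat.mul_le_mul_right δ (by
    calc 4 = 2 * 2 := rfl
    _ ≤ i * d := Nat.mul_le_mul hi hd)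
  omega

lemma arith2 {d z1 z2 lam : ℕ} (h : d * z1 + z2 ≤ lam) (hd : 2 ≤ d) (h1 : 1 ≤ z1) :
    z1 + z2 < lam := by
  have h2z : 2 * z1 ≤ d * z1 := Nat.mul_le_mul_right _ hd
  omega

lemma supp_St {A : ℂ} {p : Polynomial ℂ} {Q : PP} {j v : ℕ}
    (h : pc (St A p Q) j v ≠ 0) :
    ∃ z ∈ pairs Q, p.natDegree * j + v ≤ z.1 + p.natDegree * z.2 := by
  rw [St_coeff] at h
  obtain ⟨z, hz, hterm⟩ := Finset.exists_ne_zero_of_sum_ne_zero h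
  refine ⟨z, hz, ?_⟩
  set d := p.natDegree with hd
  have hch : (z.2.choose j : ℂ) ≠ 0 := by
    intro h0; rw [h0] at hterm; simp at hterm
  have hj : j ≤ z.2 := by
    by_contra hlt
    exact hch (by rw [Nat.choose_eq_zero_of_lt (by omega)]; simp)
  have hzv : z.1 ≤ v := by
    by_contra hc
    rw [if_neg hc] at hterm; simp at hterm
  have hcoef : (p ^ (z.2 - j)).coeff (v - z.1) ≠ 0 := by
    intro h0; rw [if_pos hzv, h0] at hterm; simp at hterm
  have hdeg : v - z.1 ≤ (z.2 - j) * d := by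
    calc v - z.1 ≤ (p ^ (z.2 - j)).natDegree := le_natDegree_of_ne_zero hcoef
      _ ≤ (z.2 - j) * d := natDegree_pow_le' p _
  obtain ⟨k, hk⟩ : ∃ k, z.2 = j + k := ⟨z.2 - j, by omega⟩
  have hk2 : z.2 - j = k := by omega
  have hmul : d * z.2 = d * j + d * k := by rw [hk]; ring
  have hkd : k * d = d * k := mul_comm _ _
  rw [hk2, hkd] at hdeg
  omega

lemma card_filter_mod (m i r : ℕ) (hi : 2 ≤ i) :
    ((Finset.range m).filter (fun j => j % i = r)).card ≤ max 1 (m - 1) := by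
  rcases Nat.eq_zero_or_pos m with hm | hm
  · subst hm; simp
  have hcard : ((Finset.range m).filter (fun j => j % i = r)).card ≤ (m - 1) / i + 1 := by
    have : ((Finset.range m).filter (fun j => j % i = r)).card
        ≤ (Finset.range ((m - 1) / i + 1)).card := by
      apply Finset.card_le_card_of_injOn (fun j => j / i)
      · intro j hj
        simp only [Finset.coe_filter, Set.mem_setOf_eq, Finset.mem_range] at hj
        simp only [Finset.mem_coe, Finset.mem_range]
        have : j / i ≤ (m - 1) / i := Nat.div_le_div_right (by omega)
        omega
      · intro a ha b hb hab
        rw [Finset.coe_filter, Set.mem_setOf_eq] at ha hb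
        have hab' : a / i = b / i := by simpa using hab
        have e1 := Nat.div_add_mod a i
        have e2 := Nat.div_add_mod b i
        rw [ha.2, hab'] at e1
        rw [hb.2] at e2
        omega
    simpa using this
  have h2 : (m - 1) / i ≤ (m - 1) / 2 := Nat.div_le_div_left hi (by omega)
  omega

lemma key (A : ℂ) (p : Polynomial ℂ) (hA : A ≠ 0) (hp2 : 2 ≤ p.natDegree)
    (Q : PP) (hQ : NC Q) (m : ℕ) (hm : 1 ≤ m) (hI : Inv Q m) :
    NC (St A p Q) ∧ Inv (St A p Q) (max 1 (m - 1)) ∧ (m = 1 → Pure (St A p Q)) := by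
  have hp0 : p ≠ 0 := fun h0 => by rw [h0, natDegree_zero] at hp2; omega
  set d := p.natDegree with hd
  have hd2 : 2 ≤ d := hp2
  set L := p.leadingCoeff with hLdef
  have hL : L ≠ 0 := by simpa [hLdef] using hp0
  set lam := wdeg d Q with hlam
  have hlam1 : 1 ≤ lam := hQ.one_le_wdeg (by omega)
  obtain ⟨S, hScard, hScov⟩ := hI d hd2
  set T : Finset (ℕ × ℕ) := (pairs Q).filter (fun z => z.1 + d * z.2 = lam) with hT
  set B : Finset ℕ := T.image Prod.snd with hB
  set g : Polynomial ℂ := ∑ β ∈ B, C (pc Q (lam - d * β) β) * X ^ β with hg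
  have hTmem : ∀ z ∈ T, z ∈ pairs Q ∧ z.1 + d * z.2 = lam := by
    intro z hz; rw [hT, Finset.mem_filter] at hz; exact hz
  have hTfst : ∀ z ∈ T, z.1 = lam - d * z.2 ∧ d * z.2 ≤ lam := by
    intro z hz
    obtain ⟨_, h2⟩ := hTmem z hz
    omega
  have hgcoeff : ∀ γ, g.coeff γ = if γ ∈ B then pc Q (lam - d * γ) γ else 0 := by
    intro γ
    rw [hg, finset_sum_coeff]
    rw [Finset.sum_congr rfl (fun β _ => by
      rw [coeff_C_mul, coeff_X_pow, mul_ite, mul_one, mul_zero])]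
    exact Finset.sum_ite_eq B γ (fun β => pc Q (lam - d * β) β)
  have hBne0 : ∀ β ∈ B, pc Q (lam - d * β) β ≠ 0 := by
    intro β hβ
    rw [hB, Finset.mem_image] at hβ
    obtain ⟨z, hzT, hz2⟩ := hβ
    obtain ⟨hzp, _⟩ := hTmem z hzT
    obtain ⟨h1, _⟩ := hTfst z hzT
    rw [← hz2, ← h1]
    exact mem_pairs.mp hzp
  have hgsupp : g.support ⊆ B := by
    intro γ hγ
    rw [mem_support_iff, hgcoeff] at hγ
    by_contra hγB
    rw [if_neg hγB] at hγ; exact hγ rfl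
  have hTne : T.Nonempty := by
    obtain ⟨z, hzp, hzs⟩ := Finset.exists_mem_eq_sup (pairs Q)
      (pairs_nonempty hQ.ne_zero) (fun z : ℕ × ℕ => z.1 + d * z.2)
    exact ⟨z, by rw [hT, Finset.mem_filter]; exact ⟨hzp, hzs.symm⟩⟩
  have hgne : g ≠ 0 := by
    obtain ⟨z, hzT⟩ := hTne
    have hzB : z.2 ∈ B := by
      rw [hB, Finset.mem_image]; exact ⟨z, hzT, rfl⟩
    intro h0
    have := hgcoeff z.2
    rw [h0, if_pos hzB] at this
    exact hBne0 z.2 hzB (by rw [← this]; simp)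
  have hTS : T ⊆ S := by
    intro z hz
    obtain ⟨h1, h2⟩ := hTmem z hz
    exact hScov z h1 h2
  have hBcard : B.card ≤ m := by
    calc B.card ≤ T.card := Finset.card_image_le
      _ ≤ S.card := Finset.card_le_card hTS
      _ ≤ m := hScard
  obtain ⟨j₀, hj₀B, hj₀c⟩ := lemA g L hgne hL
  have hj₀m : j₀ < m := by
    have := Finset.card_le_card hgsupp
    omega
  have hj₀deg : j₀ ≤ g.natDegree := by
    have h1 : j₀ ≤ (g.comp (X + C L)).natDegree := le_natDegree_of_ne_zero hj₀c
    have h2 : (g.comp (X + C L)).natDegree = g.natDegree := by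
      rw [natDegree_comp]
      simp [natDegree_X_add_C]
    omega
  have hdgnd : d * g.natDegree ≤ lam := by
    have hnd : g.natDegree ∈ B := hgsupp (natDegree_mem_support_of_nonzero hgne)
    rw [hB, Finset.mem_image] at hnd
    obtain ⟨z, hzT, hz2⟩ := hnd
    obtain ⟨_, h2⟩ := hTfst z hzT
    rw [← hz2]; exact h2
  have hdj₀ : d * j₀ ≤ lam := by
    calc d * j₀ ≤ d * g.natDegree := Nat.mul_le_mul_left d hj₀deg
      _ ≤ lam := hdgnd
  -- the corner coefficient
  have hcorner : pc (St A p Q) j₀ (lam - d * j₀)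
      = (-A) ^ j₀ * (g.comp (X + C L)).coeff j₀ := by
    rw [St_coeff, comp_coeff]
    have hrestrict : ∑ z ∈ pairs Q,
        pc Q z.1 z.2 * (z.2.choose j₀ : ℂ) * (-A) ^ j₀ *
          (if z.1 ≤ lam - d * j₀ then (p ^ (z.2 - j₀)).coeff ((lam - d * j₀) - z.1) else 0)
        = ∑ z ∈ T, pc Q z.1 z.2 * (z.2.choose j₀ : ℂ) * (-A) ^ j₀ *
          (if z.1 ≤ lam - d * j₀ then (p ^ (z.2 - j₀)).coeff ((lam - d * j₀) - z.1) else 0) := by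
      symm
      apply Finset.sum_subset (Finset.filter_subset _ _)
      intro z hzp hzT
      have hline : z.1 + d * z.2 ≠ lam := by
        intro h0
        exact hzT (Finset.mem_filter.mpr ⟨hzp, h0⟩)
      have hle : z.1 + d * z.2 ≤ lam := le_wdeg hzp
      have hlt : z.1 + d * z.2 < lam := by omega
      by_cases hj : j₀ ≤ z.2
      · by_cases hzv : z.1 ≤ lam - d * j₀
        · rw [if_pos hzv]
          obtain ⟨k, hk⟩ : ∃ k, z.2 = j₀ + k := ⟨z.2 - j₀, by omega⟩
          have hk2 : z.2 - j₀ = k := by omega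
          have hmul : d * z.2 = d * j₀ + d * k := by rw [hk]; ring
          have hcz : (p ^ (z.2 - j₀)).coeff ((lam - d * j₀) - z.1) = 0 := by
            apply coeff_eq_zero_of_natDegree_lt
            rw [natDegree_pow, hk2, ← hd, mul_comm k d]
            exact arith1 hmul hlt hdj₀
          rw [hcz]; ring
        · rw [if_neg hzv]; ring
      · have : (z.2.choose j₀ : ℂ) = 0 := by
          rw [Nat.choose_eq_zero_of_lt (by omega)]; simp
        rw [this]; ring
    rw [hrestrict]
    have hterm : ∀ z ∈ T, pc Q z.1 z.2 * (z.2.choose j₀ : ℂ) * (-A) ^ j₀ *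
          (if z.1 ≤ lam - d * j₀ then (p ^ (z.2 - j₀)).coeff ((lam - d * j₀) - z.1) else 0)
        = (-A) ^ j₀ * (pc Q z.1 z.2 * (L ^ (z.2 - j₀) * (z.2.choose j₀ : ℂ))) := by
      intro z hzT
      obtain ⟨hfst, hdz⟩ := hTfst z hzT
      by_cases hj : j₀ ≤ z.2
      · have hdjz : d * j₀ ≤ d * z.2 := Nat.mul_le_mul_left d hj
        have hzv : z.1 ≤ lam - d * j₀ := by
          rw [hfst]; exact arith_le hdjz hdz
        obtain ⟨k, hk⟩ : ∃ k, z.2 = j₀ + k := ⟨z.2 - j₀, by omega⟩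
        have hk2 : z.2 - j₀ = k := by omega
        have hmul : d * z.2 = d * j₀ + d * k := by rw [hk]; ring
        have hvz : (lam - d * j₀) - z.1 = d * k := by
          rw [hfst]; exact arith3 hdz hmul
        rw [if_pos hzv, hvz, hk2]
        have hcoefk : (p ^ k).coeff (d * k) = L ^ k := by
          have h1 : (p ^ k).natDegree = d * k := by rw [natDegree_pow, ← hd]; ring
          rw [← h1, coeff_natDegree, leadingCoeff_pow, hLdef]
        rw [hcoefk]; ring
      · have hc0 : (z.2.choose j₀ : ℂ) = 0 := by
          rw [Nat.choose_eq_zero_of_lt (by omega)]; simp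
        rw [hc0]; ring
    rw [Finset.sum_congr rfl hterm]
    have hext : ∑ β ∈ g.support, g.coeff β * (L ^ (β - j₀) * (β.choose j₀ : ℂ))
        = ∑ β ∈ B, pc Q (lam - d * β) β * (L ^ (β - j₀) * (β.choose j₀ : ℂ)) := by
      rw [Finset.sum_subset hgsupp]
      · apply Finset.sum_congr rfl
        intro β hβ
        rw [hgcoeff, if_pos hβ]
      · intro β hβB hβs
        rw [mem_support_iff, not_not] at hβs
        rw [hβs]; ring
    rw [hext, ← Finset.mul_sum]
    congr 1
    rw [hB, Finset.sum_image (f := fun β => pc Q (lam - d * β) β * (L ^ (β - j₀) * (β.choose j₀ : ℂ)))]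
    · apply Finset.sum_congr rfl
      intro z hzT
      obtain ⟨hfst, _⟩ := hTfst z hzT
      rw [← hfst]
    · intro z1 hz1 z2 hz2 hsnd
      obtain ⟨h1, _⟩ := hTfst z1 hz1
      obtain ⟨h2, _⟩ := hTfst z2 hz2
      have : z1.1 = z2.1 := by rw [h1, h2, hsnd]
      exact Prod.ext this hsnd
  have hcornerne : pc (St A p Q) j₀ (lam - d * j₀) ≠ 0 := by
    rw [hcorner]
    exact mul_ne_zero (pow_ne_zero _ (neg_ne_zero.mpr hA)) hj₀c
  have hcornermem : ((j₀, lam - d * j₀) : ℕ × ℕ) ∈ pairs (St A p Q) :=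
    mem_pairs.mpr hcornerne
  have hub : ∀ z ∈ pairs (St A p Q), d * z.1 + z.2 ≤ lam := by
    intro z hz
    obtain ⟨z', hz', hle⟩ := supp_St (mem_pairs.mp hz)
    have := le_wdeg (i := d) hz'
    rw [← hd] at hle
    omega
  refine ⟨?_, ?_, ?_⟩
  · -- NC
    refine ⟨(j₀, lam - d * j₀), hcornermem, ?_⟩
    rcases Nat.eq_zero_or_pos j₀ with h0 | h0
    · subst h0
      simp only [Nat.mul_zero, Nat.sub_zero]
      intro hcontra
      have : lam = 0 := (Prod.ext_iff.mp hcontra).2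
      omega
    · intro hcontra
      have : j₀ = 0 := (Prod.ext_iff.mp hcontra).1
      omega
  · -- Inv
    intro i hi
    have hlow : j₀ + i * (lam - d * j₀) ≤ wdeg i (St A p Q) := le_wdeg hcornermem
    refine ⟨((Finset.range m).filter (fun j => j % i = (wdeg i (St A p Q)) % i)).image
      (fun j => (j, ((wdeg i (St A p Q)) - j) / i)), ?_, ?_⟩
    · calc _ ≤ ((Finset.range m).filter
            (fun j => j % i = (wdeg i (St A p Q)) % i)).card := Finset.card_image_le
        _ ≤ max 1 (m - 1) := card_filter_mod m i _ hi
    · intro z hz hline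
      have hsupp := hub z hz
      have hz1 : z.1 ≤ j₀ := arith_key hi hd2 hsupp hdj₀ hlow hline
      refine Finset.mem_image.mpr ⟨z.1, ?_, ?_⟩
      · rw [Finset.mem_filter, Finset.mem_range]
        constructor
        · omega
        · rw [← hline]
          exact (Nat.add_mul_mod_self_left z.1 i z.2).symm
      · have hsub : (wdeg i (St A p Q)) - z.1 = i * z.2 := by
          rw [← hline, Nat.add_sub_cancel_left]
        rw [hsub, Nat.mul_div_cancel_left _ (by omega : 0 < i)]
  · -- Pure
    intro hm1
    have hj₀0 : j₀ = 0 := by omega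
    refine ⟨lam, hlam1, ?_, ?_⟩
    · have := hcornerne
      rw [hj₀0] at this
      simpa using this
    · intro z hz
      have hsupp := hub z hz
      rcases Nat.eq_zero_or_pos z.1 with h1 | h1
      · by_cases h2 : z.2 = lam
        · left; exact Prod.ext h1 h2
        · right
          rw [h1] at hsupp ⊢
          simp only [Nat.mul_zero, Nat.zero_add] at hsupp ⊢
          omega
      · right
        exact arith2 hsupp hd2 h1

end


noncomputable section
def Mod (f : ℂ × ℂ → ℂ × ℂ) (t : ℕ) (Φ : PP → PP) : Prop :=
  (∀ (Q : PP) (x y : ℂ), Ev x y (Φ Q) = Ev (f (x, y)).1 (f (x, y)).2 Q) ∧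
  ∀ Q : PP, NC Q →
    NC (Φ Q) ∧ (∀ m, 1 ≤ m → Inv Q m → Inv (Φ Q) (max 1 (m - t))) ∧
    (1 ≤ t → Inv Q t → Pure (Φ Q)) ∧ (Pure Q → Pure (Φ Q))

lemma mod_congr {f f' : ℂ × ℂ → ℂ × ℂ} {t : ℕ} {Φ : PP → PP}
    (h : Mod f t Φ) (he : ∀ z, f' z = f z) : Mod f' t Φ := by
  obtain ⟨h1, h2⟩ := h
  refine ⟨?_, h2⟩
  intro Q x y
  rw [he (x, y)]
  exact h1 Q x y

lemma inv_card (Q : PP) : Inv Q (pairs Q).card :=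
  fun _ _ => ⟨pairs Q, le_refl _, fun z hz _ => hz⟩

lemma mod_gen {h : ℂ × ℂ → ℂ × ℂ} {dd : ℕ} (hh : IsGenHenonDeg h dd) :
    ∃ Φ : PP → PP, Mod h 1 Φ := by
  obtain ⟨A, p, hA, hp2, _, hform⟩ := hh
  refine ⟨St A p, ?_, ?_⟩
  · intro Q x y
    rw [Ev_St, hform x y]
  · intro Q hQ
    have hkey := fun m hm hI => key A p hA hp2 Q hQ m hm hI
    have hbase := hkey (max 1 (pairs Q).card) (le_max_left _ _)
      ((inv_card Q).mono (le_max_right _ _))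
    refine ⟨hbase.1, ?_, ?_, ?_⟩
    · intro m hm hI
      exact (hkey m hm hI).2.1
    · intro _ hI
      exact (hkey 1 (le_refl 1) hI).2.2 rfl
    · intro hPure
      exact (hkey 1 (le_refl 1) hPure.inv_one).2.2 rfl

lemma mod_comp {f g F : ℂ × ℂ → ℂ × ℂ} {Φ Ψ : PP → PP} {t s : ℕ}
    (hf : Mod f t Φ) (hg : Mod g s Ψ) (hFg : ∀ z, F z = f (g z)) :
    Mod F (t + s) (fun Q => Ψ (Φ Q)) := by
  obtain ⟨hf1, hf2⟩ := hf
  obtain ⟨hg1, hg2⟩ := hg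
  constructor
  · intro Q x y
    rw [hg1 (Φ Q) x y, hf1 Q (g (x, y)).1 (g (x, y)).2, hFg (x, y)]
  · intro Q hQ
    obtain ⟨hNC1, hInv1, hPure1, hPP1⟩ := hf2 Q hQ
    obtain ⟨hNC2, hInv2, hPure2, hPP2⟩ := hg2 (Φ Q) hNC1
    refine ⟨hNC2, ?_, ?_, ?_⟩
    · intro m hm hI
      have h1 := hInv1 m hm hI
      have h2 := hInv2 (max 1 (m - t)) (le_max_left _ _) h1
      exact h2.mono (by omega)
    · intro hts hI
      rcases Nat.eq_zero_or_pos s with hs | hs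
      · have ht : 1 ≤ t := by omega
        exact hPP2 (hPure1 ht (hI.mono (by omega)))
      · have h1 := hInv1 (t + s) (by omega) hI
        exact hPure2 hs (h1.mono (by omega))
    · intro hPure
      exact hPP2 (hPP1 hPure)

lemma mod_id : Mod id 0 id := by
  refine ⟨fun Q x y => rfl, fun Q hQ => ⟨hQ, fun m hm hI => hI.mono (by omega),
    fun h => absurd h (by omega), fun h => h⟩⟩

lemma mod_list (l : List ((ℂ × ℂ → ℂ × ℂ) × ℕ))
    (hgen : ∀ gd ∈ l, IsGenHenonDeg gd.1 gd.2) :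
    ∃ Φ : PP → PP, Mod ((l.map Prod.fst).foldr (· ∘ ·) id) l.length Φ := by
  induction l with
  | nil => exact ⟨id, mod_id⟩
  | cons gd l ih =>
    obtain ⟨Ψ, hΨ⟩ := ih (fun x hx => hgen x (List.mem_cons_of_mem _ hx))
    obtain ⟨Φg, hΦg⟩ := mod_gen (hgen gd List.mem_cons_self)
    refine ⟨fun Q => Ψ (Φg Q), ?_⟩
    have hc := mod_comp (F := (((gd :: l).map Prod.fst).foldr (· ∘ ·) id))
      hΦg hΨ (fun z => rfl)
    have hlen : 1 + l.length = (gd :: l).length := by simp [Nat.add_comm]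
    rw [hlen] at hc
    exact hc

lemma mod_henon {h : ℂ × ℂ → ℂ × ℂ} (hh : IsHenon h) :
    ∃ (Φ : PP → PP) (t : ℕ), 1 ≤ t ∧ Mod h t Φ := by
  obtain ⟨dd, l, hlne, hgen, hfold, _⟩ := hh
  obtain ⟨Φ, hΦ⟩ := mod_list l hgen
  refine ⟨Φ, l.length, ?_, ?_⟩
  · cases l with
    | nil => exact absurd rfl hlne
    | cons a l => simp
  · exact mod_congr hΦ (fun z => by rw [hfold])

lemma wordProd_succ {n k : ℕ} (H : Fin n → Equiv.Perm (ℂ × ℂ)) (w : Fin (k + 1) → Fin n) :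
    wordProd H w = H (w 0) * wordProd H (w ∘ Fin.succ) := by
  rw [wordProd, wordProd, List.ofFn_succ, List.prod_cons]
  rfl

lemma mod_word {n : ℕ} (H : Fin n → Equiv.Perm (ℂ × ℂ)) (hH : ∀ i, IsHenon ⇑(H i)) :
    ∀ (k : ℕ) (w : Fin k → Fin n),
      ∃ (Φ : PP → PP) (t : ℕ), k ≤ t ∧ Mod (⇑(wordProd H w)) t Φ := by
  intro k
  induction k with
  | zero =>
    intro w
    refine ⟨id, 0, le_refl _, mod_congr mod_id ?_⟩
    intro z
    rw [wordProd]
    simp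
  | succ k ih =>
    intro w
    obtain ⟨Ψ, t2, ht2, hΨ⟩ := ih (w ∘ Fin.succ)
    obtain ⟨Φ, t1, ht1, hΦ⟩ := mod_henon (hH (w 0))
    refine ⟨fun Q => Ψ (Φ Q), t1 + t2, by omega, ?_⟩
    apply mod_comp hΦ hΨ
    intro z
    rw [wordProd_succ]
    exact Equiv.Perm.mul_apply _ _ _

-- === part 6 : conversions ===

def toX : MvPolynomial (Fin 2) ℂ →+* PP :=
  MvPolynomial.eval₂Hom (Polynomial.C.comp Polynomial.C) ![X, C X]

lemma Ev_toX (x y : ℂ) (P : MvPolynomial (Fin 2) ℂ) :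
    Ev x y (toX P) = MvPolynomial.eval ![x, y] P := by
  have h : (Ev x y).comp toX = (MvPolynomial.eval ![x, y] : MvPolynomial (Fin 2) ℂ →+* ℂ) := by
    apply MvPolynomial.ringHom_ext
    · intro c
      simp [toX, Ev]
    · intro i
      fin_cases i
      · simp [toX, Ev]
      · simp [toX, Ev, Matrix.cons_val_one, Matrix.head_cons]
  calc Ev x y (toX P) = ((Ev x y).comp toX) P := rfl
    _ = _ := by rw [h]

def fromX : PP →+* MvPolynomial (Fin 2) ℂ :=
  Polynomial.eval₂RingHom
    (Polynomial.eval₂RingHom (MvPolynomial.C) (MvPolynomial.X 1)) (MvPolynomial.X 0)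

lemma Ev_fromX (x y : ℂ) (Q : PP) :
    MvPolynomial.eval ![x, y] (fromX Q) = Ev x y Q := by
  have h : (MvPolynomial.eval ![x, y]).comp fromX = Ev x y := by
    apply Polynomial.ringHom_ext
    · intro r
      have h2 : ((MvPolynomial.eval ![x, y]).comp
          (Polynomial.eval₂RingHom (MvPolynomial.C) (MvPolynomial.X 1) :
            Polynomial ℂ →+* MvPolynomial (Fin 2) ℂ))
          = Polynomial.evalRingHom y := by
        apply Polynomial.ringHom_ext
        · intro c; simp
        · simp
      calc (MvPolynomial.eval ![x, y]).comp fromX (C r)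
          = MvPolynomial.eval ![x, y] (Polynomial.eval₂RingHom (MvPolynomial.C)
              (MvPolynomial.X 1) r) := by simp [fromX]
        _ = Polynomial.evalRingHom y r := by rw [← RingHom.comp_apply, h2]
        _ = Ev x y (C r) := by rw [Ev_C]; simp
    · simp [fromX, Ev]
  calc MvPolynomial.eval ![x, y] (fromX Q) = ((MvPolynomial.eval ![x, y]).comp fromX) Q := rfl
    _ = Ev x y Q := by rw [h]

lemma totalDegree_fromX (Q : PP) (D : ℕ) (h : ∀ z ∈ pairs Q, z.1 + z.2 ≤ D) :
    (fromX Q).totalDegree ≤ D := by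
  have hexp : fromX Q = ∑ α ∈ Q.support,
      (∑ β ∈ (Q.coeff α).support,
        MvPolynomial.C (pc Q α β) * MvPolynomial.X 1 ^ β) * MvPolynomial.X 0 ^ α := by
    conv_lhs => rw [fromX, coe_eval₂RingHom, eval₂_eq_sum, Polynomial.sum_def]
    apply Finset.sum_congr rfl
    intro α _
    congr 1
    conv_lhs => rw [coe_eval₂RingHom, eval₂_eq_sum, Polynomial.sum_def]
    rfl
  rw [hexp]
  apply (MvPolynomial.totalDegree_finset_sum _ _).trans
  apply Finset.sup_le
  intro α hα
  apply (MvPolynomial.totalDegree_mul _ _).trans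
  have hXa : (MvPolynomial.X 0 ^ α : MvPolynomial (Fin 2) ℂ).totalDegree ≤ α := by
    apply (MvPolynomial.totalDegree_pow _ _).trans
    simp [MvPolynomial.totalDegree_X]
  have hαD : α ≤ D := by
    rw [mem_support_iff] at hα
    obtain ⟨β, hβ⟩ := (Polynomial.nonempty_support_iff).mpr hα
    have hz : ((α, β) : ℕ × ℕ) ∈ pairs Q := mem_pairs.mpr (mem_support_iff.mp hβ)
    have hαβ : α + β ≤ D := h _ hz
    omega
  have hsum : ((∑ β ∈ (Q.coeff α).support,
      MvPolynomial.C (pc Q α β) * MvPolynomial.X 1 ^ β : MvPolynomial (Fin 2) ℂ)).totalDegree ≤ D - α := by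
    apply (MvPolynomial.totalDegree_finset_sum _ _).trans
    apply Finset.sup_le
    intro β hβ
    have h1 : (MvPolynomial.C (pc Q α β) : MvPolynomial (Fin 2) ℂ).totalDegree = 0 :=
      MvPolynomial.totalDegree_C _
    have h2 : (MvPolynomial.X 1 ^ β : MvPolynomial (Fin 2) ℂ).totalDegree = β :=
      MvPolynomial.totalDegree_X_pow _ _
    have hz : ((α, β) : ℕ × ℕ) ∈ pairs Q := by
      rw [mem_pairs]
      exact mem_support_iff.mp hβ
    have hαβ : α + β ≤ D := h _ hz
    have hb : (MvPolynomial.C (pc Q α β) * MvPolynomial.X 1 ^ β :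
        MvPolynomial (Fin 2) ℂ).totalDegree ≤ β := by
      refine le_trans (MvPolynomial.totalDegree_mul _ _) ?_
      rw [h1, h2]
      omega
    refine le_trans hb ?_
    omega
  refine le_trans (Nat.add_le_add hsum hXa) ?_
  omega


end
end HenonAux

open HenonAux Polynomial in
theorem leading_term_pure_power (n : ℕ) (hn : 0 < n)
    (H : Fin n → Equiv.Perm (ℂ × ℂ)) (hH : ∀ i, IsHenon ⇑(H i))
    (P : MvPolynomial (Fin 2) ℂ) (hP : 0 < P.totalDegree) :
    ∃ k₀ : ℕ, 1 ≤ k₀ ∧ ∀ k ≥ k₀, ∀ w : Fin k → Fin n,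
      ∃ (c : ℂ) (N : ℕ) (q : MvPolynomial (Fin 2) ℂ),
        c ≠ 0 ∧ q.totalDegree < N ∧
        ∀ x y : ℂ,
          MvPolynomial.eval ![(wordProd H w (x, y)).1, (wordProd H w (x, y)).2] P =
            c * y ^ N + MvPolynomial.eval ![x, y] q := by
  classical
  have hNCP : NC (toX P) := by
    by_contra hnc
    rw [NC] at hnc
    push_neg at hnc
    have hPc : toX P = Polynomial.C (Polynomial.C (pc (toX P) 0 0)) := by
      apply Polynomial.ext; intro α
      rw [Polynomial.coeff_C]
      split_ifs with hα
      · subst hα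
        apply Polynomial.ext; intro β
        rw [Polynomial.coeff_C]
        split_ifs with hβ
        · subst hβ; rfl
        · by_contra hne
          have hz : ((0, β) : ℕ × ℕ) ∈ pairs (toX P) := mem_pairs.mpr hne
          exact hβ (congrArg Prod.snd (hnc _ hz))
      · by_contra hne
        obtain ⟨β, hβ⟩ := Polynomial.nonempty_support_iff.mpr hne
        have hz : ((α, β) : ℕ × ℕ) ∈ pairs (toX P) :=
          mem_pairs.mpr (Polynomial.mem_support_iff.mp hβ)
        exact hα (congrArg Prod.fst (hnc _ hz))
    have hPconst : P = MvPolynomial.C (pc (toX P) 0 0) := by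
      apply MvPolynomial.funext
      intro v
      have hv : (![v 0, v 1] : Fin 2 → ℂ) = v := by
        funext i; fin_cases i <;> rfl
      rw [← hv, ← Ev_toX, hPc, Ev_C, MvPolynomial.eval_C]
      simp [pc]
    rw [hPconst] at hP
    simp [MvPolynomial.totalDegree_C] at hP
  refine ⟨max 1 (pairs (toX P)).card, le_max_left _ _, ?_⟩
  intro k hk w
  obtain ⟨Φ, t, hkt, hmod1, hmod2⟩ := mod_word H hH k w
  obtain ⟨_, _, hPureCl, _⟩ := hmod2 (toX P) hNCP
  have hInvP : Inv (toX P) t := (inv_card (toX P)).mono (by omega)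
  have hPure : Pure (Φ (toX P)) := hPureCl (by omega) hInvP
  obtain ⟨N, hN1, hcne, hcov⟩ := hPure
  refine ⟨pc (Φ (toX P)) 0 N, N,
    fromX (Φ (toX P) - Polynomial.C (Polynomial.C (pc (Φ (toX P)) 0 N) * Polynomial.X ^ N)),
    hcne, ?_, ?_⟩
  · -- totalDegree bound
    have hRestpc : ∀ α β : ℕ,
        pc (Φ (toX P) - Polynomial.C (Polynomial.C (pc (Φ (toX P)) 0 N) * Polynomial.X ^ N)) α β
          = pc (Φ (toX P)) α β - (if α = 0 ∧ β = N then pc (Φ (toX P)) 0 N else 0) := by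
      intro α β
      rw [pc, Polynomial.coeff_sub, Polynomial.coeff_sub, Polynomial.coeff_C]
      congr 1
      by_cases h1 : α = 0
      · rw [if_pos h1, Polynomial.coeff_C_mul, Polynomial.coeff_X_pow]
        by_cases h2 : β = N
        · rw [if_pos h2, if_pos ⟨h1, h2⟩, mul_one]
        · rw [if_neg h2, if_neg (fun hc => h2 hc.2), mul_zero]
      · rw [if_neg h1, if_neg (fun hc => h1 hc.1), Polynomial.coeff_zero]
    have hD : ∀ z ∈ pairs
        (Φ (toX P) - Polynomial.C (Polynomial.C (pc (Φ (toX P)) 0 N) * Polynomial.X ^ N)),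
        z.1 + z.2 ≤ N - 1 := by
      intro z hz
      have hne := mem_pairs.mp hz
      rw [hRestpc] at hne
      by_cases hzN : z = ((0 : ℕ), N)
      · exfalso
        apply hne
        rw [hzN]
        simp
      · have hQz : pc (Φ (toX P)) z.1 z.2 ≠ 0 := by
          intro h0
          apply hne
          rw [h0, if_neg, sub_zero]
          intro ⟨h1, h2⟩
          exact hzN (Prod.ext h1 h2)
        rcases hcov z (mem_pairs.mpr hQz) with h1 | h1
        · exact absurd h1 hzN
        · omega
    have := totalDegree_fromX _ (N - 1) hD
    omega
  · intro x y
    have hev : Ev x y (Φ (toX P))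
        = MvPolynomial.eval ![(wordProd H w (x, y)).1, (wordProd H w (x, y)).2] P := by
      rw [hmod1 (toX P) x y, Ev_toX]
    rw [← hev]
    have hsplit : Φ (toX P)
        = Polynomial.C (Polynomial.C (pc (Φ (toX P)) 0 N) * Polynomial.X ^ N)
          + (Φ (toX P) - Polynomial.C (Polynomial.C (pc (Φ (toX P)) 0 N) * Polynomial.X ^ N)) := by
      ring
    conv_lhs => rw [hsplit]
    rw [map_add, Ev_C, Ev_fromX]
    simp
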